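/- Let γ ∈ Φ and write γ = Σ_{α∈Δ} n_α α with n_α ∈ ℤ. Then γ is a long root if and only if r divides n_α for every short simple root α ∈ Δ_sh. -/

import Mathlib

open scoped RealInnerProductSpace Classical

noncomputable section

variable {V : Type} [NormedAddCommGroup V] [InnerProductSpace ℝ V] [FiniteDimensional ℝ V]

/-- The orthogonal reflection of `V` in the hyperplane orthogonal to `α`
(the reflection `s_α` when `α` is a root). -/
def sref (α : V) : V ≃ₗᵢ[ℝ] V := Submodule.reflection (Submodule.span ℝ {α})ᗮ

/-- The pairing `⟨β, γ∨⟩ = 2(β|γ)/(γ|γ)` of a vector with the coroot of `γ`. -/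
def cpair (β γ : V) : ℝ := 2 * ⟪β, γ⟫ / ⟪γ, γ⟫

/-- An irreducible reduced (crystallographic) root system in the real inner product
space `V`, the inner product being invariant under the Weyl group (automatic, since
reflections are isometries), normalized so that the shortest roots have squared length `1`. -/
structure NRootSystem (V : Type) [NormedAddCommGroup V] [InnerProductSpace ℝ V]
    [FiniteDimensional ℝ V] where
  Φ : Finset V
  nonempty : Φ.Nonempty
  zero_not_mem : (0 : V) ∉ Φ
  span_eq_top : Submodule.span ℝ (Φ : Set V) = ⊤
  reduced : ∀ α ∈ Φ, ∀ t : ℝ, t • α ∈ Φ → t = 1 ∨ t = -1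
  pairing_int : ∀ α ∈ Φ, ∀ β ∈ Φ, ∃ n : ℤ, 2 * ⟪β, α⟫ = n * ⟪α, α⟫
  reflect_mem : ∀ α ∈ Φ, ∀ β ∈ Φ, sref α β ∈ Φ
  irreducible : ∀ S : Finset V, S ⊆ Φ → S.Nonempty → (Φ \ S).Nonempty →
    ∃ α ∈ S, ∃ β ∈ Φ \ S, ⟪α, β⟫ ≠ 0
  norm_one_le : ∀ α ∈ Φ, 1 ≤ ⟪α, α⟫
  exists_norm_one : ∃ α ∈ Φ, ⟪α, α⟫ = 1

namespace NRootSystem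

variable (R : NRootSystem V)

/-- `r`, the maximal squared length of a root. -/
def r : ℝ := R.Φ.sup' R.nonempty fun α => ⟪α, α⟫

/-- long roots -/
def IsLong (α : V) : Prop := α ∈ R.Φ ∧ ⟪α, α⟫ = R.r

/-- short roots -/
def IsShort (α : V) : Prop := α ∈ R.Φ ∧ ⟪α, α⟫ < R.r

/-- The Weyl group `W`, generated by the reflections in the roots. -/
def Weyl : Subgroup (V ≃ₗᵢ[ℝ] V) := Subgroup.closure (sref '' (R.Φ : Set V))

end NRootSystem

/-- The standard parabolic subgroup `W_I` generated by the reflections in `I ⊆ Δ`. -/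
def WeylP (I : Finset V) : Subgroup (V ≃ₗᵢ[ℝ] V) := Subgroup.closure (sref '' (I : Set V))

/-- A base (set of simple roots) `Δ` of the root system, together with the
integral coordinates `coeff γ α` of each root `γ` in the basis `Δ`; every root is a
nonnegative or a nonpositive integral combination of the simple roots. -/
structure Base {V : Type} [NormedAddCommGroup V] [InnerProductSpace ℝ V]
    [FiniteDimensional ℝ V] (R : NRootSystem V) where
  Δ : Finset V
  subset : Δ ⊆ R.Φ
  indep : LinearIndependent ℝ (fun a : {x : V // x ∈ Δ} => (a : V))
  coeff : V → V → ℤ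
  coeff_spec : ∀ γ ∈ R.Φ, γ = ∑ α ∈ Δ, (coeff γ α : ℝ) • α
  coeff_sign : ∀ γ ∈ R.Φ, (∀ α ∈ Δ, 0 ≤ coeff γ α) ∨ (∀ α ∈ Δ, coeff γ α ≤ 0)

namespace Base

variable {R : NRootSystem V} (B : Base R)

/-- positive roots -/
def IsPos (γ : V) : Prop := γ ∈ R.Φ ∧ ∀ α ∈ B.Δ, 0 ≤ B.coeff γ α

/-- negative roots -/
def IsNeg (γ : V) : Prop := γ ∈ R.Φ ∧ ∀ α ∈ B.Δ, B.coeff γ α ≤ 0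

/-- the height of a root -/
def ht (γ : V) : ℤ := ∑ α ∈ B.Δ, B.coeff γ α

/-- the dual height `ht∨ γ = ht (γ∨)`: the height of the coroot `γ∨ = 2γ/(γ|γ)`
with respect to the basis of simple coroots `α∨ = 2α/(α|α)`, `α ∈ Δ`. -/
def htv (γ : V) : ℝ := ∑ α ∈ B.Δ, (B.coeff γ α : ℝ) * ⟪α, α⟫ / ⟪γ, γ⟫

/-- The length of `w`: the minimal length of an expression of `w` as a product of
simple reflections. -/
def len (w : V ≃ₗᵢ[ℝ] V) : ℕ :=
  sInf {n | ∃ g : Fin n → V, (∀ i, g i ∈ B.Δ) ∧ w = (List.ofFn fun i => sref (g i)).prod}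

/-- `w` is the longest element of the subgroup `H`. -/
def IsLongest (H : Subgroup (V ≃ₗᵢ[ℝ] V)) (w : V ≃ₗᵢ[ℝ] V) : Prop :=
  w ∈ H ∧ ∀ u ∈ H, B.len u ≤ B.len w

/-- `X_I = {w ∈ W | w(Φ_I⁺) ⊆ Φ⁺}`, the set of minimal length coset
representatives of `W/W_I`. -/
def XI (I : Finset V) : Set (V ≃ₗᵢ[ℝ] V) :=
  {w | w ∈ R.Weyl ∧
    ∀ γ, γ ∈ R.Φ → γ ∈ Submodule.span ℝ (I : Set V) → B.IsPos γ → B.IsPos (w γ)}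

/-- `h` is the highest root. -/
def IsHighest (h : V) : Prop :=
  h ∈ R.Φ ∧ ∀ γ ∈ R.Φ, ∀ α ∈ B.Δ, B.coeff γ α ≤ B.coeff h α

/-- `Ĩ = {α ∈ Δ | (h|α) = 0}`, the simple roots orthogonal to the highest root `h`. -/
def Itil (h : V) : Finset V := B.Δ.filter fun α => ⟪h, α⟫ = 0

/-- The level `L(α)` of a long root `α`, where `h` is the highest root:
`L(α) = ht∨(h) − ht∨(α)` if `α > 0` and `L(α) = ht∨(h) − ht∨(α) − 1` if `α < 0`. -/
def level (h α : V) : ℝ :=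
  if B.IsPos α then B.htv h - B.htv α else B.htv h - B.htv α - 1

/-- The elementary step relation `β →_γ α` on long roots (`γ` a positive root):
`α = s_γ(β)` and `L(α) = L(β) + 1`. -/
def Step (h γ β α : V) : Prop :=
  R.IsLong β ∧ R.IsLong α ∧ B.IsPos γ ∧ α = sref γ β ∧
    B.level h α = B.level h β + 1

/-- `g` is the sequence of positive roots of a path
`β = β₀ →_{g 0} β₁ →_{g 1} ⋯ →_{g (n-1)} β_n = α` from `β` to `α`. -/
def IsPathWord (h : V) {n : ℕ} (g : Fin n → V) (β α : V) : Prop :=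
  ∃ c : Fin (n + 1) → V, c 0 = β ∧ c (Fin.last n) = α ∧
    ∀ i : Fin n, B.Step h (g i) (c i.castSucc) (c i.succ)

/-- a path all of whose steps use simple roots -/
def IsSimplePathWord (h : V) {n : ℕ} (g : Fin n → V) (β α : V) : Prop :=
  B.IsPathWord h g β α ∧ ∀ i, g i ∈ B.Δ

/-- there is a path from `β` to `α`, i.e. `α ⪯ β` -/
def HasPath (h β α : V) : Prop := ∃ (n : ℕ) (g : Fin n → V), B.IsPathWord h g β α

/-- there is a simple path from `β` to `α` -/
def HasSimplePath (h β α : V) : Prop :=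
  ∃ (n : ℕ) (g : Fin n → V), B.IsSimplePathWord h g β α

/-- The covering relation `w →_γ w'` for the Bruhat order:
`w' = s_γ w` and `l(w') = l(w) + 1`, for a positive root `γ`. -/
def BStep (γ : V) (w w' : V ≃ₗᵢ[ℝ] V) : Prop :=
  B.IsPos γ ∧ w' = sref γ * w ∧ B.len w' = B.len w + 1

/-- The Bruhat order on `W`: the reflexive–transitive closure of the covering
relations. -/
def bruhatLE : (V ≃ₗᵢ[ℝ] V) → (V ≃ₗᵢ[ℝ] V) → Prop :=
  Relation.ReflTransGen fun w w' => ∃ γ, B.BStep γ w w'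

/-- `x` is an element of `W` with `x(β) = α` of the minimal possible length
`|L(α) − L(β)|` (this is the element `x_{αβ}` when it exists). -/
def MinTake (h β α : V) (x : V ≃ₗᵢ[ℝ] V) : Prop :=
  x ∈ R.Weyl ∧ x β = α ∧ (B.len x : ℝ) = |B.level h α - B.level h β|

/-- `g` is a reduced expression of `x` as a product of simple reflections. -/
def IsReducedWord {n : ℕ} (g : Fin n → V) (x : V ≃ₗᵢ[ℝ] V) : Prop :=
  (∀ i, g i ∈ B.Δ) ∧ x = (List.ofFn fun i => sref (g i)).prod ∧ n = B.len x

/-- The depth of a positive root `β`: the minimal integer `k` such that there is an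
element `w` of `W` of length `k` with `w(β) < 0`. -/
def depth (β : V) : ℕ := sInf {n | ∃ w ∈ R.Weyl, B.len w = n ∧ B.IsNeg (w β)}

end Base

section AuxProof

variable {R : NRootSystem V}

lemma NRootSystem.inner_self_pos (R : NRootSystem V) {α : V} (hα : α ∈ R.Φ) :
    0 < ⟪α, α⟫ :=
  lt_of_lt_of_le one_pos (R.norm_one_le α hα)

lemma NRootSystem.root_ne_zero (R : NRootSystem V) {α : V} (hα : α ∈ R.Φ) : α ≠ 0 :=
  fun h => R.zero_not_mem (h ▸ hα)

lemma sref_apply' {α : V} (hα : α ≠ 0) (x : V) :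
    sref α x = x - (2 * ⟪x, α⟫ / ⟪α, α⟫) • α := by
  have hn : ‖α‖ ≠ 0 := norm_ne_zero_iff.mpr hα
  rw [sref, Submodule.reflection_apply, Submodule.starProjection_orthogonal_val,
    Submodule.starProjection_singleton, real_inner_self_eq_norm_sq, real_inner_comm x α]
  match_scalars
  all_goals (field_simp; try norm_num)

lemma sref_inner (α x y : V) : ⟪sref α x, sref α y⟫ = ⟪x, y⟫ :=
  (sref α).inner_map_map x y

lemma sref_self {α : V} (hα : α ≠ 0) : sref α α = -α := by
  have h : ⟪α, α⟫ ≠ 0 := by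
    simpa [real_inner_self_eq_norm_sq, pow_eq_zero_iff] using hα
  rw [sref_apply' hα]
  have h2 : 2 * ⟪α, α⟫ / ⟪α, α⟫ = 2 := by field_simp
  rw [h2]
  module

lemma NRootSystem.neg_mem (R : NRootSystem V) {γ : V} (hγ : γ ∈ R.Φ) : -γ ∈ R.Φ := by
  have := R.reflect_mem γ hγ γ hγ
  rwa [sref_self (R.root_ne_zero hγ)] at this

lemma NRootSystem.inner_le_r (R : NRootSystem V) {α : V} (hα : α ∈ R.Φ) :
    ⟪α, α⟫ ≤ R.r :=
  Finset.le_sup' (fun x : V => (⟪x, x⟫ : ℝ)) hα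

lemma NRootSystem.exists_r (R : NRootSystem V) : ∃ α ∈ R.Φ, ⟪α, α⟫ = R.r := by
  obtain ⟨b, hb, h⟩ := Finset.exists_mem_eq_sup' R.nonempty (fun α => ⟪α, α⟫)
  exact ⟨b, hb, h.symm⟩

lemma NRootSystem.one_le_r (R : NRootSystem V) : 1 ≤ R.r := by
  obtain ⟨α, hα, h1⟩ := R.exists_norm_one
  calc (1 : ℝ) = ⟪α, α⟫ := h1.symm
    _ ≤ R.r := R.inner_le_r hα

lemma NRootSystem.r_pos (R : NRootSystem V) : 0 < R.r :=
  lt_of_lt_of_le one_pos R.one_le_r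

/-- There is an element of the Weyl orbit of `α` which is not orthogonal to `β`. -/
lemma NRootSystem.exists_same_norm_inner_ne_zero (R : NRootSystem V) {α β : V}
    (hα : α ∈ R.Φ) (hβ : β ∈ R.Φ) :
    ∃ δ ∈ R.Φ, ⟪δ, δ⟫ = ⟪α, α⟫ ∧ ⟪δ, β⟫ ≠ 0 := by
  classical
  set O : Finset V := R.Φ.filter (fun γ => ∃ w : V ≃ₗᵢ[ℝ] V, w ∈ R.Weyl ∧ w α = γ) with hO
  have hαO : α ∈ O := Finset.mem_filter.mpr ⟨hα, 1, one_mem _, by simp⟩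
  have hOnorm : ∀ γ ∈ O, ⟪γ, γ⟫ = ⟪α, α⟫ := by
    intro γ hγ
    obtain ⟨-, w, -, rfl⟩ := Finset.mem_filter.mp hγ
    exact w.inner_map_map α α
  have hOrefl : ∀ γ ∈ O, ∀ a ∈ R.Φ, sref a γ ∈ O := by
    intro γ hγ a ha
    obtain ⟨hγΦ, w, hw, hwα⟩ := Finset.mem_filter.mp hγ
    refine Finset.mem_filter.mpr ⟨R.reflect_mem a ha γ hγΦ, sref a * w, ?_, ?_⟩
    · exact mul_mem (Subgroup.subset_closure ⟨a, Finset.mem_coe.mpr ha, rfl⟩) hw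
    · rw [LinearIsometryEquiv.coe_mul]
      simp [Function.comp, hwα]
  set S : Finset V := R.Φ.filter (fun γ => ∃ δ ∈ O, ⟪γ, δ⟫ ≠ 0) with hS
  have hβS : β ∈ S := by
    by_contra hβS
    have hSsub : S ⊆ R.Φ := Finset.filter_subset _ _
    have hSne : S.Nonempty :=
      ⟨α, Finset.mem_filter.mpr ⟨hα, α, hαO, ne_of_gt (R.inner_self_pos hα)⟩⟩
    have hcne : (R.Φ \ S).Nonempty := ⟨β, Finset.mem_sdiff.mpr ⟨hβ, hβS⟩⟩
    obtain ⟨a, haS, b, hbc, hab⟩ := R.irreducible S hSsub hSne hcne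
    obtain ⟨haΦ, δ, hδO, haδ⟩ := Finset.mem_filter.mp haS
    obtain ⟨hbΦ, hbS'⟩ := Finset.mem_sdiff.mp hbc
    have hborth : ∀ δ' ∈ O, ⟪b, δ'⟫ = 0 := by
      intro δ' hδ'
      by_contra h
      exact hbS' (Finset.mem_filter.mpr ⟨hbΦ, δ', hδ', h⟩)
    have ha0 : a ≠ 0 := R.root_ne_zero haΦ
    have hδ'O : sref a δ ∈ O := hOrefl δ hδO a haΦ
    have hval : ⟪b, sref a δ⟫ = -(2 * ⟪δ, a⟫ / ⟪a, a⟫) * ⟪b, a⟫ := by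
      rw [sref_apply' ha0, inner_sub_right, real_inner_smul_right, hborth δ hδO]
      ring
    have h1 : ⟪δ, a⟫ ≠ 0 := by rw [real_inner_comm]; exact haδ
    have h2 : ⟪a, a⟫ ≠ 0 := ne_of_gt (R.inner_self_pos haΦ)
    have h3 : ⟪b, a⟫ ≠ 0 := by rw [real_inner_comm]; exact hab
    have hne : ⟪b, sref a δ⟫ ≠ 0 := by
      rw [hval]
      exact mul_ne_zero (neg_ne_zero.mpr (div_ne_zero (mul_ne_zero two_ne_zero h1) h2)) h3
    exact hne (hborth _ hδ'O)
  obtain ⟨hβΦ', δ, hδO, hβδ⟩ := Finset.mem_filter.mp hβS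
  exact ⟨δ, (Finset.mem_filter.mp hδO).1, hOnorm δ hδO, by rw [real_inner_comm]; exact hβδ⟩

/-- The ratio of squared lengths of non-orthogonal roots is `1`, `2` or `3`. -/
lemma NRootSystem.ratio (R : NRootSystem V) {α β : V} (hα : α ∈ R.Φ) (hβ : β ∈ R.Φ)
    (hne : ⟪α, β⟫ ≠ 0) (hle : ⟪α, α⟫ ≤ ⟪β, β⟫) :
    ⟪β, β⟫ = ⟪α, α⟫ ∨ ⟪β, β⟫ = 2 * ⟪α, α⟫ ∨ ⟪β, β⟫ = 3 * ⟪α, α⟫ := by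
  obtain ⟨n, hn⟩ := R.pairing_int α hα β hβ
  obtain ⟨m, hm⟩ := R.pairing_int β hβ α hα
  have hαα := R.inner_self_pos hα
  have hββ := R.inner_self_pos hβ
  by_cases hdep : ∃ t : ℝ, β = t • α
  · obtain ⟨t, rfl⟩ := hdep
    left
    rcases R.reduced α hα t hβ with h | h <;> subst h <;>
      simp [real_inner_smul_left, real_inner_smul_right]
  · -- strict Cauchy-Schwarz
    have hcs : ⟪α, β⟫ * ⟪α, β⟫ ≤ ⟪α, α⟫ * ⟪β, β⟫ := real_inner_mul_inner_self_le α β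
    have hstrict : ⟪α, β⟫ * ⟪α, β⟫ < ⟪α, α⟫ * ⟪β, β⟫ := by
      rcases hcs.lt_or_eq with h | h
      · exact h
      · exfalso
        have habs : ⟪α, β⟫ = ‖α‖ * ‖β‖ ∨ ⟪α, β⟫ = -(‖α‖ * ‖β‖) := by
          have h' : ⟪α, β⟫ ^ 2 = (‖α‖ * ‖β‖) ^ 2 := by
            rw [real_inner_self_eq_norm_sq, real_inner_self_eq_norm_sq] at h
            nlinarith [h]
          rcases sq_eq_sq_iff_eq_or_eq_neg.mp h' with h'' | h''
          · exact Or.inl h''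
          · exact Or.inr (by rw [h''])
        rcases habs with h' | h'
        · have := inner_eq_norm_mul_iff_real.mp h'
          have hβeq : β = (‖α‖⁻¹ * ‖β‖) • α := by
            have hα' : ‖α‖ ≠ 0 := norm_ne_zero_iff.mpr (R.root_ne_zero hα)
            rw [mul_smul, this, smul_smul, inv_mul_cancel₀ hα', one_smul]
          exact hdep ⟨_, hβeq⟩
        · have h'' : ⟪α, -β⟫ = ‖α‖ * ‖-β‖ := by
            rw [inner_neg_right, norm_neg, h']; ring
          have := inner_eq_norm_mul_iff_real.mp h''
          have hβeq : β = -(‖α‖⁻¹ * ‖-β‖) • α := by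
            have hα' : ‖α‖ ≠ 0 := norm_ne_zero_iff.mpr (R.root_ne_zero hα)
            have h2 : -β = (‖α‖⁻¹ * ‖-β‖) • α := by
              rw [mul_smul, this, smul_smul, inv_mul_cancel₀ hα', one_smul]
            rw [neg_smul, ← h2, neg_neg]
          exact hdep ⟨_, hβeq⟩
    -- basic identities
    have hnm : (n : ℝ) * ⟪α, α⟫ = (m : ℝ) * ⟪β, β⟫ := by
      rw [← hn, ← hm, real_inner_comm]

    have hprod : 4 * (⟪α, β⟫ * ⟪α, β⟫) = (n : ℝ) * m * (⟪α, α⟫ * ⟪β, β⟫) := by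
      have e1 : 2 * ⟪β, α⟫ = n * ⟪α, α⟫ := hn
      have e2 : 2 * ⟪α, β⟫ = m * ⟪β, β⟫ := hm
      rw [real_inner_comm α β] at e1
      linear_combination (2 * ⟪α, β⟫) * e1 + ((n : ℝ) * ⟪α, α⟫) * e2
    have hnm_pos : 0 < n * m := by
      have h4 : 0 < 4 * (⟪α, β⟫ * ⟪α, β⟫) := by
        have := mul_self_pos.mpr hne
        linarith
      have : (0 : ℝ) < (n : ℝ) * m := by
        nlinarith [hprod, mul_pos hαα hββ]
      exact_mod_cast this
    have hnm_lt : n * m < 4 := by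
      have : (n : ℝ) * m < 4 := by
        nlinarith [hprod, hstrict, mul_pos hαα hββ]
      exact_mod_cast this
    have hm0 : m ≠ 0 := by rintro rfl; simp at hnm_pos
    have hn0 : n ≠ 0 := by rintro rfl; simp at hnm_pos
    -- m = ± 1
    have hm1 : m = 1 ∨ m = -1 := by
      by_contra hcon
      push_neg at hcon
      rcases lt_trichotomy m 0 with hmneg | hmz | hmpos
      · -- m ≤ -2, n < 0
        have hm2 : m ≤ -2 := by omega
        have hnneg : n < 0 := by
          rcases lt_trichotomy n 0 with h | h | h
          · exact h
          · exact absurd h hn0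
          · exfalso; nlinarith [hnm_pos]
        have hn2 : n ≤ m := by
          have hmR : (m : ℝ) ≤ -2 := by exact_mod_cast hm2
          have hprod2 : 0 ≤ (-(m : ℝ)) * (⟪β, β⟫ - ⟪α, α⟫) :=
            mul_nonneg (by linarith) (by linarith)
          have h1 : (n : ℝ) * ⟪α, α⟫ ≤ (m : ℝ) * ⟪α, α⟫ := by nlinarith [hnm, hprod2]
          have : (n : ℝ) ≤ (m : ℝ) := le_of_mul_le_mul_right (by linarith [h1]) hαα
          exact_mod_cast this
        nlinarith [hnm_lt, hm2, hn2]
      · exact hm0 hmz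
      · have hm2 : 2 ≤ m := by omega
        have hnpos : 0 < n := by
          rcases lt_trichotomy n 0 with h | h | h
          · exfalso; nlinarith [hnm_pos]
          · exact absurd h hn0
          · exact h
        have hn2 : m ≤ n := by
          have hmR : (2 : ℝ) ≤ (m : ℝ) := by exact_mod_cast hm2
          have hprod2 : 0 ≤ ((m : ℝ)) * (⟪β, β⟫ - ⟪α, α⟫) :=
            mul_nonneg (by linarith) (by linarith)
          have h1 : (m : ℝ) * ⟪α, α⟫ ≤ (n : ℝ) * ⟪α, α⟫ := by nlinarith [hnm, hprod2]
          have : (m : ℝ) ≤ (n : ℝ) := le_of_mul_le_mul_right (by linarith [h1]) hαα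
          exact_mod_cast this
        nlinarith [hnm_lt, hm2, hn2]
    have hm_sq : (m : ℝ) * m = 1 := by
      rcases hm1 with h | h <;> subst h <;> norm_num
    have hk : ⟪β, β⟫ = ((n * m : ℤ) : ℝ) * ⟪α, α⟫ := by
      push_cast
      linear_combination (-(m : ℝ)) * hnm - ⟪β, β⟫ * hm_sq
    have hk1 : 1 ≤ n * m := hnm_pos
    interval_cases h : n * m
    · rw [hk]; norm_num
    · rw [hk]; norm_num
    · rw [hk]; norm_num

/-- Roots have squared length `1`, `2` or `3`. -/
lemma NRootSystem.norm_sq_cases (R : NRootSystem V) {x : V} (hx : x ∈ R.Φ) :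
    ⟪x, x⟫ = 1 ∨ ⟪x, x⟫ = 2 ∨ ⟪x, x⟫ = 3 := by
  obtain ⟨α₁, hα₁, hα₁1⟩ := R.exists_norm_one
  obtain ⟨δ, hδ, hδn, hδx⟩ := R.exists_same_norm_inner_ne_zero hα₁ hx
  have h1 : ⟪δ, δ⟫ = 1 := hδn.trans hα₁1
  have hle : ⟪δ, δ⟫ ≤ ⟪x, x⟫ := by rw [h1]; exact R.norm_one_le x hx
  rcases R.ratio hδ hx hδx hle with h | h | h <;> rw [h1] at h <;> rw [h] <;> norm_num

/-- Two lengths: every root has squared length `1` or `r`. -/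
lemma NRootSystem.norm_sq_eq_one_or_r (R : NRootSystem V) {β : V} (hβ : β ∈ R.Φ) :
    ⟪β, β⟫ = 1 ∨ ⟪β, β⟫ = R.r := by
  obtain ⟨lam, hlam, hlamr⟩ := R.exists_r
  have hβr : ⟪β, β⟫ ≤ R.r := R.inner_le_r hβ
  rcases R.norm_sq_cases hβ with h | h | h
  · exact Or.inl h
  · -- ⟪β,β⟫ = 2
    by_cases hr : ⟪β, β⟫ = R.r
    · exact Or.inr hr
    exfalso
    have hr3 : R.r = 3 := by
      rcases R.norm_sq_cases hlam with h' | h' | h' <;> rw [hlamr] at h'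
      · linarith [R.one_le_r, hβr, h]
      · exact absurd (h.trans h'.symm) hr
      · exact h'
    obtain ⟨δ, hδ, hδn, hδlam⟩ := R.exists_same_norm_inner_ne_zero hβ hlam
    have hle : ⟪δ, δ⟫ ≤ ⟪lam, lam⟫ := by
      rw [hδn, h, hlamr, hr3]; norm_num
    rcases R.ratio hδ hlam hδlam hle with h' | h' | h' <;>
      rw [hδn, h] at h' <;> rw [hlamr, hr3] at h' <;> norm_num at h'
  · -- ⟪β,β⟫ = 3
    right
    have h3r : 3 ≤ R.r := h ▸ hβr
    rcases R.norm_sq_cases hlam with h' | h' | h' <;> rw [hlamr] at h' <;>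
      [skip; skip; skip]
    · linarith
    · linarith
    · rw [h, h']

/-- `r` is an integer, equal to `1`, `2` or `3`. -/
lemma NRootSystem.r_int (R : NRootSystem V) :
    ∃ n : ℤ, (n : ℝ) = R.r ∧ (n = 1 ∨ n = 2 ∨ n = 3) := by
  obtain ⟨lam, hlam, hlamr⟩ := R.exists_r
  rcases R.norm_sq_cases hlam with h | h | h <;> rw [hlamr] at h
  · exact ⟨1, by rw [h]; norm_num, Or.inl rfl⟩
  · exact ⟨2, by rw [h]; norm_num, Or.inr (Or.inl rfl)⟩
  · exact ⟨3, by rw [h]; norm_num, Or.inr (Or.inr rfl)⟩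

/-- Uniqueness of coefficients. -/
lemma Base.coeff_unique (B : Base R) {γ : V} (hγ : γ ∈ R.Φ) (d : V → ℤ)
    (hd : γ = ∑ α ∈ B.Δ, (d α : ℝ) • α) : ∀ α ∈ B.Δ, B.coeff γ α = d α := by
  have h0 : ∑ α ∈ B.Δ, ((B.coeff γ α - d α : ℤ) : ℝ) • α = 0 := by
    have : ∑ α ∈ B.Δ, ((B.coeff γ α - d α : ℤ) : ℝ) • α
        = (∑ α ∈ B.Δ, (B.coeff γ α : ℝ) • α) - ∑ α ∈ B.Δ, (d α : ℝ) • α := by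
      rw [← Finset.sum_sub_distrib]
      refine Finset.sum_congr rfl fun α _ => ?_
      push_cast
      rw [sub_smul]
    rw [this, ← B.coeff_spec γ hγ, ← hd, sub_self]
  have h1 : ∀ a : {x // x ∈ B.Δ}, ((B.coeff γ (a : V) - d (a : V) : ℤ) : ℝ) = 0 := by
    have h2 := linearIndependent_iff'.mp B.indep Finset.univ
      (fun a : {x // x ∈ B.Δ} => ((B.coeff γ (a : V) - d (a : V) : ℤ) : ℝ))
    have h3 : ∑ a : {x // x ∈ B.Δ}, ((B.coeff γ (a : V) - d (a : V) : ℤ) : ℝ) • (a : V) = 0 := by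
      rw [Finset.sum_coe_sort B.Δ (fun α => ((B.coeff γ α - d α : ℤ) : ℝ) • α)]
      exact h0
    intro a
    exact h2 h3 a (Finset.mem_univ a)
  intro α hα
  have := h1 ⟨α, hα⟩
  have h4 : ((B.coeff γ α - d α : ℤ) : ℝ) = 0 := this
  have h5 : (B.coeff γ α - d α : ℤ) = 0 := by exact_mod_cast h4
  omega

lemma Base.coeff_simple (B : Base R) {σ : V} (hσ : σ ∈ B.Δ) :
    ∀ α ∈ B.Δ, B.coeff σ α = if α = σ then 1 else 0 := by
  apply B.coeff_unique (B.subset hσ)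
  have : ∀ α ∈ B.Δ, (((if α = σ then 1 else 0 : ℤ)) : ℝ) • α
      = if α = σ then α else 0 := by
    intro α _
    split <;> simp
  rw [Finset.sum_congr rfl this, Finset.sum_ite_eq' B.Δ σ (fun α => α), if_pos hσ]

lemma Base.coeff_neg (B : Base R) {γ : V} (hγ : γ ∈ R.Φ) :
    ∀ α ∈ B.Δ, B.coeff (-γ) α = -B.coeff γ α := by
  apply B.coeff_unique (R.neg_mem hγ)
  have h := B.coeff_spec γ hγ
  have hneg : ∑ α ∈ B.Δ, ((-(B.coeff γ α) : ℤ) : ℝ) • α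
      = -∑ α ∈ B.Δ, (B.coeff γ α : ℝ) • α := by
    rw [← Finset.sum_neg_distrib]
    refine Finset.sum_congr rfl fun α _ => ?_
    push_cast
    rw [neg_smul]
  rw [hneg, ← h]

lemma Base.coeff_reflect (B : Base R) {γ α : V} (hγ : γ ∈ R.Φ) (hα : α ∈ B.Δ) {n : ℤ}
    (hn : 2 * ⟪γ, α⟫ = n * ⟪α, α⟫) :
    ∀ β ∈ B.Δ, B.coeff (sref α γ) β = B.coeff γ β - if β = α then n else 0 := by
  have hαΦ := B.subset hα
  have hα0 := R.root_ne_zero hαΦ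
  apply B.coeff_unique (R.reflect_mem α hαΦ γ hγ)
  rw [sref_apply' hα0]
  have hsc : 2 * ⟪γ, α⟫ / ⟪α, α⟫ = (n : ℝ) := by
    have h2 : ⟪α, α⟫ ≠ 0 := ne_of_gt (R.inner_self_pos hαΦ)
    rw [hn, mul_div_assoc, div_self h2, mul_one]
  rw [hsc]
  have hrhs : ∑ β ∈ B.Δ, ((B.coeff γ β - if β = α then n else 0 : ℤ) : ℝ) • β
      = (∑ β ∈ B.Δ, (B.coeff γ β : ℝ) • β) - (n : ℝ) • α := by
    have step : ∀ β ∈ B.Δ, ((B.coeff γ β - if β = α then n else 0 : ℤ) : ℝ) • β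
        = (B.coeff γ β : ℝ) • β - (if β = α then (n : ℝ) • β else 0) := by
      intro β _
      split <;> push_cast <;> module
    rw [Finset.sum_congr rfl step, Finset.sum_sub_distrib,
      Finset.sum_ite_eq' B.Δ α (fun β => (n : ℝ) • β), if_pos hα]
  rw [hrhs, ← B.coeff_spec γ hγ]

lemma Base.ht_pos (B : Base R) {γ : V} (hγ : γ ∈ R.Φ) (hp : B.IsPos γ) : 0 < B.ht γ := by
  have h0 : 0 ≤ B.ht γ := Finset.sum_nonneg fun x hx => hp.2 x hx
  rcases h0.lt_or_eq with h | h
  · exact h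
  · exfalso
    have hz : ∀ x ∈ B.Δ, B.coeff γ x = 0 :=
      (Finset.sum_eq_zero_iff_of_nonneg (fun x hx => hp.2 x hx)).mp h.symm
    have hγ0 : γ = 0 := by
      rw [B.coeff_spec γ hγ]
      exact Finset.sum_eq_zero fun x hx => by rw [hz x hx]; simp
    exact R.zero_not_mem (hγ0 ▸ hγ)

/-- A double sum of a symmetric integer-valued function with even diagonal is even. -/
lemma even_double_sum (m : V → V → ℤ) :
    ∀ s : Finset V, (∀ a ∈ s, ∀ b ∈ s, m a b = m b a) → (∀ a ∈ s, Even (m a a)) →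
      Even (∑ a ∈ s, ∑ b ∈ s, m a b) := by
  intro s
  induction s using Finset.induction_on with
  | empty => simp
  | @insert x s hx ih =>
    intro hsym hdiag
    simp only [Finset.sum_insert hx]
    rw [Finset.sum_add_distrib]
    have h1 : ∑ a ∈ s, m a x = ∑ a ∈ s, m x a :=
      Finset.sum_congr rfl fun a ha =>
        hsym a (Finset.mem_insert_of_mem ha) x (Finset.mem_insert_self x s)
    have hT : Even (∑ a ∈ s, ∑ b ∈ s, m a b) :=
      ih (fun a ha b hb => hsym a (Finset.mem_insert_of_mem ha) b (Finset.mem_insert_of_mem hb))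
        (fun a ha => hdiag a (Finset.mem_insert_of_mem ha))
    have haa : Even (m x x) := hdiag x (Finset.mem_insert_self x s)
    obtain ⟨u, hu⟩ := haa
    obtain ⟨w, hw⟩ := hT
    exact ⟨u + (∑ a ∈ s, m x a) + w, by omega⟩

/-- The forward induction: a positive long root has all its coefficients at short
simple roots divisible by `r`. -/
lemma Base.fwd_aux (B : Base R) : ∀ n : ℕ, ∀ γ, γ ∈ R.Φ → B.IsPos γ → (B.ht γ).toNat ≤ n →
    ⟪γ, γ⟫ = R.r → ∀ α ∈ B.Δ, ⟪α, α⟫ ≠ R.r → ∃ k : ℤ, (B.coeff γ α : ℝ) = R.r * k := by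
  intro n
  induction n with
  | zero =>
    intro γ hγ hpos hht _ _ _ _
    exfalso
    have := B.ht_pos hγ hpos
    omega
  | succ n ih =>
    intro γ hγ hpos hht hlong α hα hαsh
    by_cases hγΔ : γ ∈ B.Δ
    · refine ⟨0, ?_⟩
      have hne : α ≠ γ := by
        rintro rfl
        exact hαsh hlong
      rw [B.coeff_simple hγΔ α hα, if_neg hne]
      simp
    · -- find a simple root with positive coefficient and positive inner product
      have hs := B.coeff_spec γ hγ
      have hsum : ⟪γ, γ⟫ = ∑ β ∈ B.Δ, (B.coeff γ β : ℝ) * ⟪β, γ⟫ := by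
        calc ⟪γ, γ⟫ = ⟪∑ β ∈ B.Δ, (B.coeff γ β : ℝ) • β, γ⟫ := by rw [← hs]
          _ = ∑ β ∈ B.Δ, (B.coeff γ β : ℝ) * ⟪β, γ⟫ := by
              rw [sum_inner]
              exact Finset.sum_congr rfl fun β _ => real_inner_smul_left _ _ _
      have hpos' : 0 < ⟪γ, γ⟫ := R.inner_self_pos hγ
      have hex : ∃ β ∈ B.Δ, 0 < (B.coeff γ β : ℝ) * ⟪β, γ⟫ := by
        by_contra h
        push_neg at h
        have : ⟪γ, γ⟫ ≤ 0 := hsum ▸ Finset.sum_nonpos h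
        linarith
      obtain ⟨β, hβ, hβpos⟩ := hex
      have hβΦ := B.subset hβ
      have hcβ : 0 < B.coeff γ β := by
        rcases lt_or_ge 0 (B.coeff γ β) with h | h
        · exact h
        · exfalso
          have h0 := hpos.2 β hβ
          have hz : B.coeff γ β = 0 := le_antisymm h h0
          rw [hz] at hβpos
          simp at hβpos
      have hcβR : (0 : ℝ) < (B.coeff γ β : ℝ) := by exact_mod_cast hcβ
      have hβγ : 0 < ⟪β, γ⟫ := by nlinarith [hβpos, hcβR]
      obtain ⟨nβ, hnβ⟩ := R.pairing_int β hβΦ γ hγ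
      have hββ := R.inner_self_pos hβΦ
      have hnβpos : 0 < nβ := by
        have h1 : 0 < (nβ : ℝ) * ⟪β, β⟫ := by
          rw [← hnβ, real_inner_comm β γ]
          linarith
        have : (0 : ℝ) < (nβ : ℝ) := by nlinarith [h1, hββ]
        exact_mod_cast this
      have hγ'Φ : sref β γ ∈ R.Φ := R.reflect_mem β hβΦ γ hγ
      have hcoe := B.coeff_reflect hγ hβ hnβ
      -- there is a second simple root in the support of γ
      have hβ₀ : ∃ β₀ ∈ B.Δ, β₀ ≠ β ∧ 0 < B.coeff γ β₀ := by
        by_contra h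
        push_neg at h
        have hall : ∀ x ∈ B.Δ, x ≠ β → B.coeff γ x = 0 := fun x hx hne =>
          le_antisymm (h x hx hne) (hpos.2 x hx)
        have hγeq : γ = (B.coeff γ β : ℝ) • β := by
          rw [Finset.sum_eq_single β
            (fun x hx hne => by rw [hall x hx hne]; simp)
            (fun h' => absurd hβ h')] at hs
          exact hs
        have hred := R.reduced β hβΦ (B.coeff γ β : ℝ) (by rw [← hγeq]; exact hγ)
        rcases hred with h1 | h1
        · have hγβ : γ = β := by rw [hγeq, h1, one_smul]
          exact hγΔ (hγβ ▸ hβ)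
        · rw [h1] at hcβR
          linarith
      obtain ⟨β₀, hβ₀Δ, hβ₀ne, hβ₀pos⟩ := hβ₀
      have hcoeβ₀ : B.coeff (sref β γ) β₀ = B.coeff γ β₀ := by
        rw [hcoe β₀ hβ₀Δ, if_neg hβ₀ne, sub_zero]
      have hγ'pos : B.IsPos (sref β γ) := by
        refine ⟨hγ'Φ, ?_⟩
        rcases B.coeff_sign (sref β γ) hγ'Φ with h | h
        · exact h
        · exfalso
          have := h β₀ hβ₀Δ
          rw [hcoeβ₀] at this
          omega
      have hht' : B.ht (sref β γ) = B.ht γ - nβ := by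
        show ∑ x ∈ B.Δ, B.coeff (sref β γ) x = (∑ x ∈ B.Δ, B.coeff γ x) - nβ
        rw [Finset.sum_congr rfl (fun x hx => hcoe x hx), Finset.sum_sub_distrib,
          Finset.sum_ite_eq' B.Δ β (fun _ => nβ), if_pos hβ]
      have hht'' : (B.ht (sref β γ)).toNat ≤ n := by
        have h1 : 0 < B.ht (sref β γ) := B.ht_pos hγ'Φ hγ'pos
        omega
      have hγ'long : ⟪sref β γ, sref β γ⟫ = R.r := by
        rw [sref_inner]
        exact hlong
      obtain ⟨k', hk'⟩ := ih (sref β γ) hγ'Φ hγ'pos hht'' hγ'long α hα hαsh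
      by_cases hαβ : α = β
      · subst hαβ
        have h1 : ⟪α, α⟫ = 1 := by
          rcases R.norm_sq_eq_one_or_r (B.subset hα) with h | h
          · exact h
          · exact absurd h hαsh
        obtain ⟨mm, hmm⟩ := R.pairing_int γ hγ α (B.subset hα)
        have hnr : (nβ : ℝ) = mm * R.r := by
          have e1 : 2 * ⟪γ, α⟫ = nβ * ⟪α, α⟫ := hnβ
          rw [h1, mul_one] at e1
          rw [hlong, real_inner_comm γ α] at hmm
          linarith [e1, hmm]
        have hc : B.coeff γ α = B.coeff (sref α γ) α + nβ := by
          rw [hcoe α hα, if_pos rfl]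
          ring
        refine ⟨k' + mm, ?_⟩
        rw [hc]
        push_cast
        rw [hk', hnr]
        ring
      · refine ⟨k', ?_⟩
        have hceq : B.coeff (sref β γ) α = B.coeff γ α := by
          rw [hcoe α hα, if_neg hαβ, sub_zero]
        rw [← hceq]
        exact hk'

end AuxProof

/-- a root `γ = Σ_{α ∈ Δ} n_α α` is long if and only if `r` divides the
coefficient `n_α` for every short simple root `α ∈ Δ_sh`. -/
theorem isLong_iff_r_dvd_short_coeff (R : NRootSystem V) (B : Base R) {γ : V}
    (hγ : γ ∈ R.Φ) :
    R.IsLong γ ↔ ∀ α ∈ B.Δ, R.IsShort α → ∃ k : ℤ, (B.coeff γ α : ℝ) = R.r * k := by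
  constructor
  · rintro ⟨-, hlong⟩ α hα hαsh
    have hα_ne : ⟪α, α⟫ ≠ R.r := ne_of_lt hαsh.2
    rcases B.coeff_sign γ hγ with hp | hng
    · exact B.fwd_aux (B.ht γ).toNat γ hγ ⟨hγ, hp⟩ le_rfl hlong α hα hα_ne
    · have hγ' : -γ ∈ R.Φ := R.neg_mem hγ
      have hcneg := B.coeff_neg hγ
      have hposneg : B.IsPos (-γ) := by
        refine ⟨hγ', fun x hx => ?_⟩
        rw [hcneg x hx]
        have := hng x hx
        omega
      have hlong' : ⟪-γ, -γ⟫ = R.r := by rw [inner_neg_neg]; exact hlong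
      obtain ⟨k, hk⟩ := B.fwd_aux (B.ht (-γ)).toNat (-γ) hγ' hposneg le_rfl hlong' α hα hα_ne
      refine ⟨-k, ?_⟩
      rw [hcneg α hα] at hk
      push_cast at hk ⊢
      linarith
  · intro H
    refine ⟨hγ, ?_⟩
    by_contra hne
    have hγ1 : ⟪γ, γ⟫ = 1 := by
      rcases R.norm_sq_eq_one_or_r hγ with h | h
      · exact h
      · exact absurd h hne
    obtain ⟨ri, hriR, hri⟩ := R.r_int
    have hr1 : ri ≠ 1 := by
      rintro rfl
      apply hne
      rw [hγ1, ← hriR]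
      norm_num
    have hrne : R.r ≠ 0 := ne_of_gt R.r_pos
    have claim : ∀ α β : V, ∃ k : ℤ, α ∈ B.Δ → β ∈ B.Δ →
        2 * ((B.coeff γ α : ℝ) * ((B.coeff γ β : ℝ) * ⟪α, β⟫)) = R.r * k ∧
          (α = β → Even k) := by
      intro α β
      by_cases hα : α ∈ B.Δ
      · by_cases hβ : β ∈ B.Δ
        · have hαΦ := B.subset hα
          have hβΦ := B.subset hβ
          obtain ⟨n, hn⟩ := R.pairing_int α hαΦ β hβΦ
          by_cases hlr : ⟪α, α⟫ = R.r
          · refine ⟨B.coeff γ α * B.coeff γ β * n, fun _ _ => ⟨?_, ?_⟩⟩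
            · have h2 : 2 * ⟪α, β⟫ = (n : ℝ) * R.r := by
                rw [← real_inner_comm α β, hn, hlr]
              push_cast
              linear_combination (B.coeff γ α : ℝ) * (B.coeff γ β : ℝ) * h2
            · rintro rfl
              have hx : ⟪α, α⟫ ≠ 0 := ne_of_gt (R.inner_self_pos hαΦ)
              have hn2R : (n : ℝ) = 2 := by
                have h' : (n : ℝ) * ⟪α, α⟫ = 2 * ⟪α, α⟫ := hn.symm
                exact mul_right_cancel₀ hx h'
              have hn2 : n = 2 := by exact_mod_cast hn2R
              exact ⟨B.coeff γ α * B.coeff γ α, by rw [hn2]; ring⟩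
          · have h1 : ⟪α, α⟫ = 1 := by
              rcases R.norm_sq_eq_one_or_r hαΦ with h | h
              · exact h
              · exact absurd h hlr
            have hsh : R.IsShort α := ⟨hαΦ, lt_of_le_of_ne (R.inner_le_r hαΦ) hlr⟩
            obtain ⟨k, hk⟩ := H α hα hsh
            refine ⟨k * B.coeff γ β * n, fun _ _ => ⟨?_, ?_⟩⟩
            · have h2 : 2 * ⟪α, β⟫ = (n : ℝ) := by
                rw [← real_inner_comm α β, hn, h1, mul_one]
              push_cast
              calc 2 * ((B.coeff γ α : ℝ) * ((B.coeff γ β : ℝ) * ⟪α, β⟫))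
                  = (B.coeff γ α : ℝ) * (B.coeff γ β : ℝ) * (2 * ⟪α, β⟫) := by ring
                _ = (R.r * (k : ℝ)) * (B.coeff γ β : ℝ) * (n : ℝ) := by rw [hk, h2]
                _ = R.r * ((k : ℝ) * (B.coeff γ β : ℝ) * (n : ℝ)) := by ring
            · rintro rfl
              have hx : ⟪α, α⟫ ≠ 0 := ne_of_gt (R.inner_self_pos hαΦ)
              have hn2R : (n : ℝ) = 2 := by
                have h' : (n : ℝ) * ⟪α, α⟫ = 2 * ⟪α, α⟫ := hn.symm
                exact mul_right_cancel₀ hx h'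
              have hn2 : n = 2 := by exact_mod_cast hn2R
              exact ⟨k * B.coeff γ α, by rw [hn2]; ring⟩
        · exact ⟨0, fun _ hb => absurd hb hβ⟩
      · exact ⟨0, fun ha _ => absurd ha hα⟩
    choose m hm using claim
    have hsym : ∀ a ∈ B.Δ, ∀ b ∈ B.Δ, m a b = m b a := by
      intro a ha b hb
      have e1 := (hm a b ha hb).1
      have e2 := (hm b a hb ha).1
      have e3 : R.r * ((m a b : ℤ) : ℝ) = R.r * ((m b a : ℤ) : ℝ) := by
        rw [← e1, ← e2, real_inner_comm a b]
        ring
      have e4 : ((m a b : ℤ) : ℝ) = ((m b a : ℤ) : ℝ) := mul_left_cancel₀ hrne e3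
      exact_mod_cast e4
    have hdiag : ∀ a ∈ B.Δ, Even (m a a) := fun a ha => (hm a a ha ha).2 rfl
    have heven : Even (∑ a ∈ B.Δ, ∑ b ∈ B.Δ, m a b) := even_double_sum m B.Δ hsym hdiag
    have hs := B.coeff_spec γ hγ
    have hexp : ⟪γ, γ⟫
        = ∑ a ∈ B.Δ, ∑ b ∈ B.Δ, (B.coeff γ a : ℝ) * ((B.coeff γ b : ℝ) * ⟪a, b⟫) := by
      calc ⟪γ, γ⟫
          = ⟪∑ a ∈ B.Δ, (B.coeff γ a : ℝ) • a, ∑ b ∈ B.Δ, (B.coeff γ b : ℝ) • b⟫ := by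
            rw [← hs]
        _ = _ := by
            rw [sum_inner]
            refine Finset.sum_congr rfl fun a _ => ?_
            rw [real_inner_smul_left, inner_sum, Finset.mul_sum]
            refine Finset.sum_congr rfl fun b _ => ?_
            rw [real_inner_smul_right]
    have h2γ : 2 * ⟪γ, γ⟫ = R.r * ((∑ a ∈ B.Δ, ∑ b ∈ B.Δ, m a b : ℤ) : ℝ) := by
      rw [hexp, Finset.mul_sum]
      push_cast
      rw [Finset.mul_sum]
      refine Finset.sum_congr rfl fun a ha => ?_
      rw [Finset.mul_sum, Finset.mul_sum]
      refine Finset.sum_congr rfl fun b hb => ?_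
      exact (hm a b ha hb).1
    rw [hγ1] at h2γ
    obtain ⟨w, hw⟩ := heven
    have h2 : (2 : ℝ) = (ri : ℝ) * ((∑ a ∈ B.Δ, ∑ b ∈ B.Δ, m a b : ℤ) : ℝ) := by
      rw [hriR]
      linarith [h2γ]
    have h2' : (2 : ℤ) = ri * (∑ a ∈ B.Δ, ∑ b ∈ B.Δ, m a b) := by exact_mod_cast h2
    rcases hri with h | h | h
    · exact hr1 h
    · subst h; omega
    · subst h; omega
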